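/- For every natural number n ≥ 1 and every natural number j with 0 ≤ 2j+1 ≤ n, the identity Σ_{k=0}^{2j+1} (k!/2^k) · C(n-1,k) · C(n,k) · s(n-k, n-2j-1) = 0 holds. -/

import Mathlib

open Polynomial Finset

/-- Signed Stirling numbers of the first kind. -/
noncomputable def stirlingFirst (n i : ℕ) : ℤ := (descPochhammer ℤ n).coeff i

namespace StirlingAux


lemma coeff_comp_neg_X (p : ℚ[X]) (k : ℕ) :
    (p.comp (-X)).coeff k = (-1) ^ k * p.coeff k := by
  induction p using Polynomial.induction_on' with
  | add p q hp hq => simp [add_comp, hp, hq, mul_add]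
  | monomial m a =>
    have h1 : ((-1 : ℚ[X]))^m = C ((-1)^m) := by rw [map_pow, map_neg, map_one]
    rw [← C_mul_X_pow_eq_monomial, mul_comp, C_comp, pow_comp, X_comp, neg_pow, h1,
      mul_left_comm, coeff_C_mul, coeff_C_mul, coeff_X_pow]
    by_cases h : k = m
    · subst h; ring
    · simp [h]

lemma vand (b n : ℕ) : (descPochhammer ℚ n).comp (X + C (b:ℚ)) =
    ∑ k ∈ range (n+1),
      ((n.choose k : ℚ) * (descPochhammer ℚ k).eval (b:ℚ)) • descPochhammer ℚ (n-k) := by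
  induction n with
  | zero => simp
  | succ n ih =>
    set c : ℕ → ℚ := fun k => (descPochhammer ℚ k).eval (b:ℚ) with hc
    have key : ∀ k ∈ range (n+1),
        (((n.choose k : ℚ)) * c k) • descPochhammer ℚ (n-k) * (X + C (b:ℚ) - (n : ℚ[X]))
        = ((n.choose k : ℚ) * c k) • descPochhammer ℚ (n+1-k)
          + ((n.choose k : ℚ) * c (k+1)) • descPochhammer ℚ (n-k) := by
      intro k hk
      rw [mem_range, Nat.lt_succ_iff] at hk
      have hsplit : (X + C (b:ℚ) - (n : ℚ[X]))
          = (X - C ((n - k : ℕ) : ℚ)) + C ((b:ℚ) - k) := by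
        rw [Nat.cast_sub hk, ← C_eq_natCast, add_sub_assoc, ← C_sub,
          sub_add_eq_add_sub, add_sub_assoc, ← C_sub]
        congr 2
        ring
      have h1 : descPochhammer ℚ (n-k) * (X - C ((n-k:ℕ):ℚ)) = descPochhammer ℚ (n+1-k) := by
        have h := descPochhammer_succ_right ℚ (n-k)
        rw [show n - k + 1 = n + 1 - k by omega] at h
        rw [C_eq_natCast, ← h]
      have h2 : c k * ((b:ℚ) - k) = c (k+1) := (descPochhammer_succ_eval k ((b:ℚ))).symm
      rw [smul_mul_assoc, hsplit, mul_add, h1, smul_add]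
      congr 1
      rw [show descPochhammer ℚ (n-k) * C ((b:ℚ) - k) = ((b:ℚ) - k) • descPochhammer ℚ (n-k) by
        rw [smul_eq_C_mul, mul_comm], smul_smul, mul_assoc, h2]
    rw [descPochhammer_succ_right, mul_comp, sub_comp, X_comp, natCast_comp, ih, sum_mul,
      sum_congr rfl key, sum_add_distrib]
    have hS1 : ∑ k ∈ range (n+1), ((n.choose k : ℚ) * c k) • descPochhammer ℚ (n+1-k)
        = ∑ i ∈ range (n+1), ((n.choose (i+1) : ℚ) * c (i+1)) • descPochhammer ℚ (n-i)
          + ((1:ℚ) * c 0) • descPochhammer ℚ (n+1) := by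
      rw [Finset.sum_range_succ'
        (fun k => ((n.choose k : ℚ) * c k) • descPochhammer ℚ (n+1-k)) n]
      simp only [Nat.succ_sub_succ_eq_sub, Nat.choose_zero_right, Nat.cast_one, Nat.sub_zero]
      rw [Finset.sum_range_succ
        (fun i => ((n.choose (i+1) : ℚ) * c (i+1)) • descPochhammer ℚ (n-i)) n]
      simp [Nat.choose_succ_self]
    rw [hS1]
    rw [Finset.sum_range_succ'
      (fun k => (((n+1).choose k : ℚ) * c k) • descPochhammer ℚ (n+1-k)) (n+1)]
    simp only [Nat.succ_sub_succ_eq_sub, Nat.choose_zero_right, Nat.cast_one, Nat.sub_zero,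
      Nat.choose_succ_succ, Nat.cast_add, add_mul, add_smul]
    rw [sum_add_distrib]
    abel

lemma sum_choose_mul_choose (m k : ℕ) :
    ∑ b ∈ range (m+1), m.choose b * b.choose k = m.choose k * 2^(m-k) := by
  by_cases hk : k ≤ m
  · have h1 : ∑ b ∈ range (m+1), m.choose b * b.choose k
        = ∑ b ∈ Ico k (m+1), m.choose b * b.choose k := by
      rw [range_eq_Ico]
      refine (Finset.sum_subset (Finset.Ico_subset_Ico (Nat.zero_le k) le_rfl) ?_).symm
      intro b hb hb2
      simp only [mem_Ico] at hb hb2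
      have : b < k := by omega
      rw [Nat.choose_eq_zero_of_lt this, mul_zero]
    rw [h1, Finset.sum_Ico_eq_sum_range]
    have h2 : ∀ i ∈ range (m + 1 - k), m.choose (k+i) * (k+i).choose k
        = m.choose k * (m-k).choose i := by
      intro i hi
      rw [mem_range] at hi
      have hkim : k + i ≤ m := by omega
      rw [Nat.choose_mul (Nat.le_add_right k i), Nat.add_sub_cancel_left]
    rw [Finset.sum_congr rfl h2, ← Finset.mul_sum,
      show m + 1 - k = (m - k) + 1 by omega, Nat.sum_range_choose]
  · push_neg at hk
    rw [Nat.choose_eq_zero_of_lt hk, zero_mul]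
    refine Finset.sum_eq_zero fun b hb => ?_
    rw [mem_range] at hb
    rw [Nat.choose_eq_zero_of_lt (show b < k by omega), mul_zero]

lemma refl_eval (n b : ℕ) (r : ℚ) (hb : b < n) :
    (descPochhammer ℚ n).eval (-r + ((n - 1 - b : ℕ) : ℚ))
      = (-1)^n * (descPochhammer ℚ n).eval (r + b) := by
  rw [descPochhammer_eval_eq_ascPochhammer]
  have h1 : ((n - 1 - b : ℕ) : ℚ) = (n : ℚ) - 1 - b := by
    have : (1:ℕ) ≤ n := by omega
    push_cast [Nat.cast_sub (by omega : b ≤ n - 1), Nat.cast_sub this]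
    ring
  rw [h1, show -r + ((n:ℚ) - 1 - b) - n + 1 = -(r + b) by ring,
    ascPochhammer_eval_neg_eq_descPochhammer]

lemma Qsym (n : ℕ) :
    ((∑ b ∈ range n, (((n-1).choose b : ℚ)) • (descPochhammer ℚ n).comp (X + C (b:ℚ))).comp (-X))
      = ((-1:ℚ)^n) • ∑ b ∈ range n,
          (((n-1).choose b : ℚ)) • (descPochhammer ℚ n).comp (X + C (b:ℚ)) := by
  apply Polynomial.funext
  intro r
  simp only [eval_comp, eval_neg, eval_X, eval_finset_sum, eval_smul, eval_add, eval_C,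
    smul_eq_mul]
  rw [← Finset.sum_range_reflect
    (fun b => ((n-1).choose b : ℚ) * (descPochhammer ℚ n).eval (-r + b)) n]
  rw [Finset.mul_sum]
  refine Finset.sum_congr rfl fun b hb => ?_
  rw [mem_range] at hb
  rw [Nat.choose_symm (by omega : b ≤ n - 1), refl_eval n b r hb]
  ring

end StirlingAux

open StirlingAux in

theorem stirling_relation (n j : ℕ) (hn : 1 ≤ n) (hj : 2 * j + 1 ≤ n) :
    ∑ k ∈ Finset.range (2 * j + 2),
      (k.factorial : ℚ) / 2 ^ k * ((n - 1).choose k : ℚ) * (n.choose k : ℚ) *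
        (stirlingFirst (n - k) (n - (2 * j + 1)) : ℚ) = 0 := by
  set i := n - (2 * j + 1) with hi
  have hst : ∀ m : ℕ, ((stirlingFirst m i : ℤ) : ℚ) = (descPochhammer ℚ m).coeff i := by
    intro m
    rw [stirlingFirst, ← descPochhammer_map (Int.castRingHom ℚ) m, coeff_map]
    simp
  simp only [hst]
  -- extend the sum to range (n+1)
  have hsub : Finset.range (2*j+2) ⊆ Finset.range (n+1) := Finset.range_subset_range.mpr (by omega)
  have hzero : ∀ k ∈ Finset.range (n+1), k ∉ Finset.range (2*j+2) →
      (k.factorial : ℚ) / 2 ^ k * ((n - 1).choose k : ℚ) * (n.choose k : ℚ) *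
        ((descPochhammer ℚ (n - k)).coeff i) = 0 := by
    intro k hk1 hk2
    rw [mem_range] at hk1 hk2
    push_neg at hk2
    have hdeg : (descPochhammer ℚ (n-k)).natDegree < i := by
      rw [descPochhammer_natDegree]; omega
    rw [coeff_eq_zero_of_natDegree_lt hdeg, mul_zero]
  rw [Finset.sum_subset hsub hzero]
  -- the key polynomial Q
  set Q : ℚ[X] := ∑ b ∈ Finset.range n,
    (((n-1).choose b : ℚ)) • (descPochhammer ℚ n).comp (X + C (b:ℚ)) with hQdef
  have hQid : Q = ∑ k ∈ range (n+1),
      ((n.choose k * (k.factorial * ((n-1).choose k * 2^(n-1-k))) : ℕ) : ℚ)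
        • descPochhammer ℚ (n-k) := by
    rw [hQdef]
    calc ∑ b ∈ range n, (((n-1).choose b : ℚ)) • (descPochhammer ℚ n).comp (X + C (b:ℚ))
        = ∑ b ∈ range n, ∑ k ∈ range (n+1),
            (((n-1).choose b : ℚ) * ((n.choose k : ℚ) * (descPochhammer ℚ k).eval (b:ℚ)))
              • descPochhammer ℚ (n-k) := by
          refine sum_congr rfl fun b _ => ?_
          rw [vand b n, Finset.smul_sum]
          simp only [smul_smul]
      _ = ∑ k ∈ range (n+1), (∑ b ∈ range n,
            ((n-1).choose b : ℚ) * ((n.choose k : ℚ) * (descPochhammer ℚ k).eval (b:ℚ)))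
              • descPochhammer ℚ (n-k) := by
          rw [Finset.sum_comm]
          exact sum_congr rfl fun k _ => (Finset.sum_smul).symm
      _ = ∑ k ∈ range (n+1),
            ((n.choose k * (k.factorial * ((n-1).choose k * 2^(n-1-k))) : ℕ) : ℚ)
              • descPochhammer ℚ (n-k) := by
          refine sum_congr rfl fun k _ => ?_
          congr 1
          have hb : ∀ b : ℕ, (descPochhammer ℚ k).eval (b:ℚ) = (b.descFactorial k : ℚ) :=
            fun b => descPochhammer_eval_eq_descFactorial ℚ b k
          simp only [hb]
          have hnat : ∑ b ∈ range n, (n-1).choose b * b.descFactorial k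
              = k.factorial * ((n-1).choose k * 2^(n-1-k)) := by
            have hterm : ∀ b, (n-1).choose b * b.descFactorial k
                = k.factorial * ((n-1).choose b * b.choose k) := by
              intro b; rw [Nat.descFactorial_eq_factorial_mul_choose]; ring
            rw [Finset.sum_congr rfl (fun b _ => hterm b), ← Finset.mul_sum]
            have h5 := sum_choose_mul_choose (n-1) k
            rw [show n - 1 + 1 = n by omega] at h5
            rw [h5]
          have hcast : ∑ b ∈ range n, ((n-1).choose b : ℚ) * ((b.descFactorial k : ℕ) : ℚ)
              = ((∑ b ∈ range n, (n-1).choose b * b.descFactorial k : ℕ) : ℚ) := by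
            push_cast; rfl
          calc ∑ b ∈ range n, ((n-1).choose b : ℚ)
                * ((n.choose k : ℚ) * ((b.descFactorial k : ℕ) : ℚ))
              = (n.choose k : ℚ) * ∑ b ∈ range n,
                  ((n-1).choose b : ℚ) * ((b.descFactorial k : ℕ) : ℚ) := by
                rw [Finset.mul_sum]; exact sum_congr rfl fun b _ => by ring
            _ = ((n.choose k * (k.factorial * ((n-1).choose k * 2^(n-1-k))) : ℕ) : ℚ) := by
                rw [hcast, hnat]; push_cast; ring
  have hcoeff : Q.coeff i = ∑ k ∈ range (n+1),
      ((n.choose k * (k.factorial * ((n-1).choose k * 2^(n-1-k))) : ℕ) : ℚ)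
        * (descPochhammer ℚ (n-k)).coeff i := by
    rw [hQid, finset_sum_coeff]
    exact sum_congr rfl fun k _ => by rw [coeff_smul, smul_eq_mul]
  have hQ0 : Q.coeff i = 0 := by
    have h := congrArg (fun p : ℚ[X] => p.coeff i) (Qsym n)
    rw [← hQdef] at h
    simp only [coeff_comp_neg_X, coeff_smul, smul_eq_mul] at h
    have hodd : (-1:ℚ)^n = -(-1:ℚ)^i := by
      rw [show n = i + (2*j+1) by omega, pow_add,
        show ((-1:ℚ))^(2*j+1) = -1 from Odd.neg_one_pow ⟨j, by ring⟩]
      ring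
    rw [hodd] at h
    have h2 : ((-1:ℚ)^i) * Q.coeff i = 0 := by linarith
    rcases mul_eq_zero.mp h2 with h3 | h3
    · exact absurd h3 (pow_ne_zero i (by norm_num))
    · exact h3
  have hmul : (2:ℚ)^(n-1) * ∑ k ∈ range (n+1),
      (k.factorial : ℚ) / 2 ^ k * ((n - 1).choose k : ℚ) * (n.choose k : ℚ) *
        ((descPochhammer ℚ (n - k)).coeff i) = Q.coeff i := by
    rw [hcoeff, Finset.mul_sum]
    refine sum_congr rfl fun k hk => ?_
    rw [mem_range, Nat.lt_succ_iff] at hk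
    by_cases hkn : k ≤ n - 1
    · have hp : (2:ℚ)^(n-1-k) * 2^k = 2^(n-1) := by rw [← pow_add]; congr 1; omega
      push_cast
      rw [← hp]
      field_simp
    · have h0 : (n-1).choose k = 0 := Nat.choose_eq_zero_of_lt (by omega)
      simp [h0]
  have h2ne : (2:ℚ)^(n-1) ≠ 0 := pow_ne_zero _ two_ne_zero
  have := hmul.trans hQ0
  exact (mul_eq_zero.mp this).resolve_left h2ne
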